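/- Let C be a convex set of P-a.s. nonnegative random variables on a probability space (Ω, F, P). Then there exists no arbitrage of the first kind relative to C if and only if C is bounded in probability. -/

import Mathlib

open MeasureTheory Filter

/-- For a convex set `C` of `P`-a.s. nonnegative random variables, there is no
arbitrage of the first kind relative to `C` if and only if `C` is bounded in probability. -/
theorem no_arbitrage_of_first_kind_iff_bounded_in_probability
    {Ω : Type*} [MeasurableSpace Ω] (P : Measure Ω) [IsProbabilityMeasure P]
    (C : Set (Ω → ℝ))
    (hCmeas : ∀ f ∈ C, Measurable f)
    (hCnonneg : ∀ f ∈ C, ∀ᵐ ω ∂P, 0 ≤ f ω)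
    (hCconv : ∀ f ∈ C, ∀ g ∈ C, ∀ t : ℝ, 0 ≤ t → t ≤ 1 →
      (fun ω => t * f ω + (1 - t) * g ω) ∈ C) :
    (¬ ∃ ξ : Ω → ℝ, Measurable ξ ∧ (∀ᵐ ω ∂P, 0 ≤ ξ ω) ∧ 0 < P {ω | 0 < ξ ω} ∧
        ∀ x : ℝ, 0 < x → ∃ f ∈ C, ∀ᵐ ω ∂P, ξ ω ≤ x * f ω) ↔
      ∀ ε : ℝ, 0 < ε → ∃ M : ℝ, 0 < M ∧ ∀ f ∈ C, P {ω | M < f ω} ≤ ENNReal.ofReal ε := by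
  constructor
  · intro hNA
    intro ε hε
    by_contra hcon
    push_neg at hcon
    apply hNA
    obtain ⟨f0, hf0C, -⟩ := hcon 1 one_pos
    -- the "level function" s
    set img : ℝ → Set ℝ := fun r => (fun f => (P {ω | r ≤ f ω}).toReal) '' C with himg
    set s : ℝ → ℝ := fun r => sSup (img r) with hs
    have hne : ∀ r, (img r).Nonempty := fun r => ⟨_, ⟨f0, hf0C, rfl⟩⟩
    have hbdd : ∀ r, BddAbove (img r) := by
      intro r
      refine ⟨1, ?_⟩
      rintro y ⟨g, hg, rfl⟩
      have h1 : P {ω | r ≤ g ω} ≤ 1 := prob_le_one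
      have := ENNReal.toReal_mono (by simp) h1
      simpa using this
    have hsle : ∀ r, ∀ g ∈ C, (P {ω | r ≤ g ω}).toReal ≤ s r := fun r g hg =>
      le_csSup (hbdd r) ⟨g, hg, rfl⟩
    have hanti : Antitone s := by
      intro r r' hrr'
      apply csSup_le (hne r')
      rintro y ⟨g, hg, rfl⟩
      refine le_trans ?_ (hsle r g hg)
      exact ENNReal.toReal_mono (measure_ne_top _ _)
        (measure_mono fun ω hω => le_trans hrr' hω)
    have hεs : ∀ r : ℝ, 0 < r → ε ≤ s r := by
      intro r hr
      obtain ⟨g, hgC, hg⟩ := hcon r hr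
      have h1 : ENNReal.ofReal ε < P {ω | r ≤ g ω} :=
        lt_of_lt_of_le hg (measure_mono fun ω (hω : r < g ω) => hω.le)
      have h2 : ε < (P {ω | r ≤ g ω}).toReal :=
        (ENNReal.ofReal_lt_iff_lt_toReal hε.le (measure_ne_top _ _)).1 h1
      exact h2.le.trans (hsle r g hgC)
    -- the limit level t
    set t : ℝ := sInf (Set.range fun m : ℕ => s ((m : ℝ) + 1)) with htdef
    have hrangene : (Set.range fun m : ℕ => s ((m : ℝ) + 1)).Nonempty := ⟨_, ⟨0, rfl⟩⟩
    have hbddb : BddBelow (Set.range fun m : ℕ => s ((m : ℝ) + 1)) := by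
      refine ⟨ε, ?_⟩
      rintro y ⟨m, rfl⟩
      exact hεs _ (by positivity)
    have htε : ε ≤ t := le_csInf hrangene (by rintro y ⟨m, rfl⟩; exact hεs _ (by positivity))
    have ht : 0 < t := lt_of_lt_of_le hε htε
    have ht_le : ∀ r : ℝ, t ≤ s r := by
      intro r
      have h1 : t ≤ s ((⌈r⌉₊ : ℝ) + 1) := csInf_le hbddb ⟨⌈r⌉₊, rfl⟩
      exact h1.trans (hanti (le_trans (Nat.le_ceil r) (by linarith)))
    -- error terms
    set δ : ℕ → ℝ := fun k => t / 8 * (1 / 2) ^ k with hδdef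
    have hδpos : ∀ k, 0 < δ k := fun k => by positivity
    have hδle : ∀ k, δ k ≤ t / 8 := by
      intro k
      have h1 : ((1:ℝ) / 2) ^ k ≤ 1 := pow_le_one₀ (by norm_num) (by norm_num)
      have : 0 < t / 8 := by linarith
      calc δ k = t / 8 * (1/2)^k := rfl
        _ ≤ t / 8 * 1 := by nlinarith
        _ = t / 8 := by ring
    -- choose thresholds N k (monotone) at which s is close to t
    have hNex : ∀ k : ℕ, ∃ m : ℕ, s ((m : ℝ) + 1) < t + δ k := by
      intro k
      have h1 : t < t + δ k := by linarith [hδpos k]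
      obtain ⟨y, ⟨m, rfl⟩, hy⟩ := exists_lt_of_csInf_lt hrangene h1
      exact ⟨m, hy⟩
    choose c hc using hNex
    set N : ℕ → ℕ := fun k => (Finset.range (k + 1)).sup c with hNdef
    have hNmono : Monotone N := fun i j hij =>
      Finset.sup_mono (Finset.range_subset_range.2 (by omega))
    have hNs : ∀ k, s ((N k : ℝ) + 1) < t + δ k := by
      intro k
      refine lt_of_le_of_lt (hanti ?_) (hc k)
      have h1 : c k ≤ N k := Finset.le_sup (Finset.self_mem_range_succ k)
      have : (c k : ℝ) ≤ (N k : ℝ) := by exact_mod_cast h1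
      linarith
    -- the thresholds and witnesses
    set r : ℕ → ℝ := fun k => 2 ^ (k + 1) * ((N k : ℝ) + 1) with hrdef
    have hrpos : ∀ k, 0 < r k := fun k => by positivity
    have hfex : ∀ k, ∃ g ∈ C, t - δ k < (P {ω | r k ≤ g ω}).toReal := by
      intro k
      have h1 : t - δ k < s (r k) := lt_of_lt_of_le (by linarith [hδpos k]) (ht_le (r k))
      obtain ⟨y, ⟨g, hgC, rfl⟩, hy⟩ := exists_lt_of_lt_csSup (hne _) h1
      exact ⟨g, hgC, hy⟩
    choose f hfC hfP using hfex
    set A : ℕ → Set Ω := fun k => {ω | r k ≤ f k ω} with hAdef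
    have hAmeas : ∀ k, MeasurableSet (A k) :=
      fun k => measurableSet_le measurable_const (hCmeas _ (hfC k))
    have hAlo : ∀ k, t - δ k < (P (A k)).toReal := hfP
    -- pairwise union bound via convexity
    have hpair : ∀ j k : ℕ, j ≤ k → (P (A j ∪ A k)).toReal ≤ t + δ j := by
      intro j k hjk
      set g : Ω → ℝ := fun ω => (1 / 2 : ℝ) * f j ω + (1 - 1 / 2) * f k ω with hgdef
      have hgC : g ∈ C := hCconv _ (hfC j) _ (hfC k) (1 / 2) (by norm_num) (by norm_num)
      have hsub : P (A j ∪ A k) ≤ P {ω | (N j : ℝ) + 1 ≤ g ω} := by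
        apply measure_mono_ae
        filter_upwards [hCnonneg _ (hfC j), hCnonneg _ (hfC k)] with ω h1 h2
        intro hω
        show (N j : ℝ) + 1 ≤ g ω
        have h2j : (1 : ℝ) ≤ 2 ^ j := one_le_pow₀ (by norm_num)
        have h2k : (1 : ℝ) ≤ 2 ^ k := one_le_pow₀ (by norm_num)
        have hNj1 : (0 : ℝ) < (N j : ℝ) + 1 := by positivity
        have hNjk : (N j : ℝ) ≤ (N k : ℝ) := by exact_mod_cast hNmono hjk
        rcases hω with hj | hk
        · have hj' : (2:ℝ) ^ (j+1) * ((N j : ℝ) + 1) ≤ f j ω := hj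
          rw [pow_succ] at hj'
          have : (N j : ℝ) + 1 ≤ (1/2) * f j ω := by nlinarith
          have hgge : (1/2) * f j ω ≤ g ω := by
            simp only [hgdef]; nlinarith
          exact le_trans this hgge
        · have hk' : (2:ℝ) ^ (k+1) * ((N k : ℝ) + 1) ≤ f k ω := hk
          rw [pow_succ] at hk'
          have hNk1 : (0 : ℝ) < (N k : ℝ) + 1 := by positivity
          have : (N k : ℝ) + 1 ≤ (1/2) * f k ω := by nlinarith
          have hgge : (1/2) * f k ω ≤ g ω := by
            simp only [hgdef]; nlinarith
          have h7 : (N j : ℝ) + 1 ≤ (1/2) * f k ω := by linarith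
          exact le_trans h7 hgge
      calc (P (A j ∪ A k)).toReal
          ≤ (P {ω | (N j : ℝ) + 1 ≤ g ω}).toReal :=
            ENNReal.toReal_mono (measure_ne_top _ _) hsub
        _ ≤ s ((N j : ℝ) + 1) := hsle _ g hgC
        _ ≤ t + δ j := (hNs j).le
    -- difference bound
    have hdiff : ∀ j k : ℕ, j ≤ k → (P (A k \ A j)).toReal ≤ 2 * δ j := by
      intro j k hjk
      have h1 : P (A k \ A j) = P (A j ∪ A k) - P (A j) := by
        rw [← Set.union_diff_left]
        exact measure_diff Set.subset_union_left (hAmeas j).nullMeasurableSet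
          (measure_ne_top _ _)
      have h2 : (P (A k \ A j)).toReal = (P (A j ∪ A k)).toReal - (P (A j)).toReal := by
        rw [h1, ENNReal.toReal_sub_of_le (measure_mono Set.subset_union_left)
          (measure_ne_top _ _)]
      rw [h2]
      have h3 := hpair j k hjk
      have h4 := hAlo j
      linarith
    -- geometric sum bound
    have hgeo : ∀ K : ℕ, ∑ k ∈ Finset.range K, δ k ≤ t / 4 := by
      intro K
      have h1 : ∑ k ∈ Finset.range K, ((1:ℝ)/2) ^ k = 2 - 2 * (1/2)^K := by
        induction K with
        | zero => simp
        | succ n ih => rw [Finset.sum_range_succ, ih]; ring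
      have h2 : (0:ℝ) < (1/2)^K := by positivity
      calc ∑ k ∈ Finset.range K, δ k = t / 8 * ∑ k ∈ Finset.range K, ((1:ℝ)/2)^k := by
            rw [Finset.mul_sum]
        _ ≤ t / 8 * 2 := by rw [h1]; nlinarith
        _ = t / 4 := by ring
    -- partial intersections
    have hBK : ∀ K : ℕ, ENNReal.ofReal (t / 4) ≤ P (⋂ k ≤ K, A k) := by
      intro K
      have hsubK : A K ⊆ (⋂ k ≤ K, A k) ∪ ⋃ k ∈ Finset.range K, (A K \ A k) := by
        intro ω hω
        by_cases h : ω ∈ ⋂ k ≤ K, A k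
        · exact Or.inl h
        · right
          simp only [Set.mem_iInter] at h
          push_neg at h
          obtain ⟨k, hkK, hk⟩ := h
          have hkK' : k < K := by
            rcases lt_or_eq_of_le hkK with h' | h'
            · exact h'
            · exact absurd (h' ▸ hω) hk
          exact Set.mem_biUnion (Finset.mem_range.2 hkK') ⟨hω, hk⟩
      have h1 : P (A K) ≤ P (⋂ k ≤ K, A k) + ∑ k ∈ Finset.range K, P (A K \ A k) := by
        refine (measure_mono hsubK).trans ((measure_union_le _ _).trans ?_)
        exact add_le_add le_rfl (measure_biUnion_finset_le _ _)
      have h2 : (P (A K)).toReal ≤ (P (⋂ k ≤ K, A k)).toReal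
          + ∑ k ∈ Finset.range K, (P (A K \ A k)).toReal := by
        have hfin : (∑ k ∈ Finset.range K, P (A K \ A k)) ≠ ⊤ :=
          (ENNReal.sum_lt_top.2 fun k _ => measure_lt_top _ _).ne
        have := ENNReal.toReal_mono
          (by exact ENNReal.add_ne_top.2 ⟨measure_ne_top _ _, hfin⟩) h1
        rw [ENNReal.toReal_add (measure_ne_top _ _) hfin, ENNReal.toReal_sum
          (fun k _ => measure_ne_top _ _)] at this
        exact this
      have h3 : ∑ k ∈ Finset.range K, (P (A K \ A k)).toReal ≤ t / 2 := by
        calc ∑ k ∈ Finset.range K, (P (A K \ A k)).toReal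
            ≤ ∑ k ∈ Finset.range K, 2 * δ k :=
              Finset.sum_le_sum fun k hk => hdiff k K (Finset.mem_range.1 hk).le
          _ = 2 * ∑ k ∈ Finset.range K, δ k := by rw [Finset.mul_sum]
          _ ≤ 2 * (t / 4) := by linarith [hgeo K]
          _ = t / 2 := by ring
      have h4 : t / 4 ≤ (P (⋂ k ≤ K, A k)).toReal := by
        have h5 := hAlo K
        have h6 := hδle K
        linarith
      exact ENNReal.ofReal_le_of_le_toReal h4
    -- pass to the limit
    have htend := tendsto_measure_iInter_le (μ := P)
      (fun k => (hAmeas k).nullMeasurableSet) ⟨0, measure_ne_top _ _⟩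
    have hBge : ENNReal.ofReal (t / 4) ≤ P (⋂ k, A k) :=
      ge_of_tendsto htend (Eventually.of_forall hBK)
    set B : Set Ω := ⋂ k, A k with hBdef
    have hBmeas : MeasurableSet B := MeasurableSet.iInter fun k => hAmeas k
    have hPB : 0 < P B := lt_of_lt_of_le (ENNReal.ofReal_pos.2 (by linarith)) hBge
    -- the arbitrage
    refine ⟨B.indicator fun _ => (1 : ℝ), measurable_const.indicator hBmeas, ?_, ?_, ?_⟩
    · exact Eventually.of_forall fun ω => Set.indicator_nonneg (fun _ _ => zero_le_one) ω
    · have hset : {ω | 0 < B.indicator (fun _ => (1:ℝ)) ω} = B := by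
        ext ω
        by_cases h : ω ∈ B <;>
          simp [Set.indicator_of_mem, Set.indicator_of_notMem, h]
      rwa [hset]
    · intro x hx
      obtain ⟨k, hk⟩ := pow_unbounded_of_one_lt (1 / x) (one_lt_two (α := ℝ))
      refine ⟨f k, hfC k, ?_⟩
      filter_upwards [hCnonneg _ (hfC k)] with ω hfnn
      by_cases hω : ω ∈ B
      · rw [Set.indicator_of_mem hω]
        have hA : ω ∈ A k := Set.mem_iInter.1 hω k
        have h1 : (2:ℝ) ^ (k+1) * ((N k : ℝ) + 1) ≤ f k ω := hA
        have h2 : (1:ℝ) < x * 2 ^ k := by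
          rw [div_lt_iff₀ hx] at hk
          nlinarith
        have h3 : (1:ℝ) ≤ (N k : ℝ) + 1 := by have := Nat.cast_nonneg (α := ℝ) (N k); linarith
        have h4 : (0:ℝ) < 2 ^ k := by positivity
        rw [pow_succ] at h1
        nlinarith
      · rw [Set.indicator_of_notMem hω]
        positivity
  · intro hB
    rintro ⟨ξ, hξm, hξnn, hξpos, hξdom⟩
    -- find n with P {1/(n+1) < ξ} > 0
    have hsub : {ω | 0 < ξ ω} ⊆ ⋃ n : ℕ, {ω | 1 / (n + 1 : ℝ) < ξ ω} := by
      intro ω hω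
      obtain ⟨n, hn⟩ := exists_nat_one_div_lt (show (0:ℝ) < ξ ω from hω)
      exact Set.mem_iUnion.2 ⟨n, hn⟩
    have hne : ∃ n : ℕ, 0 < P {ω | 1 / (n + 1 : ℝ) < ξ ω} := by
      by_contra h
      push_neg at h
      simp only [le_zero_iff] at h
      have : P {ω | 0 < ξ ω} = 0 :=
        measure_mono_null hsub (measure_iUnion_null h)
      exact hξpos.ne' this
    obtain ⟨n, hn⟩ := hne
    set δ : ℝ := 1 / (n + 1 : ℝ) with hδ
    have hδpos : 0 < δ := by positivity
    set p : ENNReal := P {ω | δ < ξ ω} with hp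
    have hpne : p ≠ ⊤ := measure_ne_top _ _
    have hptR : 0 < p.toReal := ENNReal.toReal_pos hn.ne' hpne
    obtain ⟨M, hM, hMb⟩ := hB (p.toReal / 2) (by linarith)
    set x : ℝ := δ / (2 * M) with hx
    have hxpos : 0 < x := by positivity
    obtain ⟨f, hfC, hfd⟩ := hξdom x hxpos
    have hincl : P {ω | δ < ξ ω} ≤ P {ω | M < f ω} := by
      apply measure_mono_ae
      filter_upwards [hfd] with ω hω
      intro hδω
      have h1 : δ < x * f ω := lt_of_lt_of_le hδω hω
      show M < f ω
      have hfpos : 0 < f ω := by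
        rcases le_or_gt (f ω) 0 with h | h
        · nlinarith
        · exact h
      rw [hx] at h1
      rw [div_mul_eq_mul_div, lt_div_iff₀ (by positivity)] at h1
      nlinarith
    have hlt : ENNReal.ofReal (p.toReal / 2) < p := by
      have h2 : ENNReal.ofReal (p.toReal / 2) < ENNReal.ofReal p.toReal :=
        (ENNReal.ofReal_lt_ofReal_iff hptR).2 (by linarith)
      rwa [ENNReal.ofReal_toReal hpne] at h2
    exact absurd (hincl.trans (hMb f hfC)) (by exact not_le.2 hlt)
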